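/- A set function f : 2^V → ℝ with f(∅) = 0 is submodular if and only if its Lovász extension f̂ : [0,1]^n → ℝ is convex. -/

import Mathlib

/-- `prefixSet σ k = {σ(0), …, σ(k-1)}`, the image under `σ` of the first `k` indices. -/
def prefixSet {n : ℕ} (σ : Equiv.Perm (Fin n)) (k : ℕ) : Finset (Fin n) :=
  (Finset.univ.filter (fun j : Fin n => (j : ℕ) < k)).image σ

/-- The Lovász-extension sum `∑ i, x_{σ(i)} (f(S_i) − f(S_{i−1}))` for a permutation `σ`. -/
def lovaszSum {n : ℕ} (f : Finset (Fin n) → ℝ) (x : Fin n → ℝ)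
    (σ : Equiv.Perm (Fin n)) : ℝ :=
  ∑ i : Fin n, x (σ i) * (f (prefixSet σ ((i : ℕ) + 1)) - f (prefixSet σ (i : ℕ)))

/-- The Lovász extension: the Lovász-extension sum evaluated with a permutation sorting
the components of `x` in decreasing order (i.e., sorting `-x` increasingly). -/
noncomputable def lovasz {n : ℕ} (f : Finset (Fin n) → ℝ) (x : Fin n → ℝ) : ℝ :=
  lovaszSum f x (Tuple.sort (fun i => -x i))

/-- `f` is submodular: diminishing marginal returns. -/
def Submodular {n : ℕ} (f : Finset (Fin n) → ℝ) : Prop :=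
  ∀ A B : Finset (Fin n), A ⊆ B → ∀ i : Fin n, i ∉ B →
    f (insert i B) - f B ≤ f (insert i A) - f A

namespace LovaszAux

variable {n : ℕ}

lemma mem_prefixSet (σ : Equiv.Perm (Fin n)) (k : ℕ) (j : Fin n) :
    j ∈ prefixSet σ k ↔ ((σ.symm j : Fin n) : ℕ) < k := by
  constructor
  · intro h
    simp only [prefixSet, Finset.mem_image, Finset.mem_filter, Finset.mem_univ, true_and] at h
    obtain ⟨a, ha, rfl⟩ := h
    simpa using ha
  · intro h
    simp only [prefixSet, Finset.mem_image, Finset.mem_filter, Finset.mem_univ, true_and]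
    exact ⟨σ.symm j, h, by simp⟩

lemma card_filter_lt {k : ℕ} (hk : k ≤ n) :
    (Finset.univ.filter fun j : Fin n => (j : ℕ) < k).card = k := by
  rw [← Finset.card_range k]
  apply Finset.card_bij (fun (j : Fin n) _ => (j : ℕ))
  · intro a ha
    simp only [Finset.mem_filter] at ha
    simpa using ha.2
  · intro a ha b hb h
    exact Fin.ext h
  · intro b hb
    simp only [Finset.mem_range] at hb
    exact ⟨⟨b, lt_of_lt_of_le hb hk⟩, by simp [hb], rfl⟩

lemma prefixSet_zero (σ : Equiv.Perm (Fin n)) : prefixSet σ 0 = ∅ := by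
  ext j; simp [mem_prefixSet]

lemma prefixSet_succ (σ : Equiv.Perm (Fin n)) {k : ℕ} (hk : k < n) :
    prefixSet σ (k + 1) = insert (σ ⟨k, hk⟩) (prefixSet σ k) := by
  ext j
  simp only [mem_prefixSet, Finset.mem_insert]
  constructor
  · intro h
    rcases Nat.lt_succ_iff_lt_or_eq.mp h with h | h
    · exact Or.inr h
    · left
      have : σ.symm j = ⟨k, hk⟩ := Fin.ext h
      rw [← this, Equiv.apply_symm_apply]
  · rintro (rfl | h)
    · simp
    · exact Nat.lt_succ_of_lt h

lemma not_mem_prefixSet_self (σ : Equiv.Perm (Fin n)) (i : Fin n) :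
    σ i ∉ prefixSet σ (i : ℕ) := by
  simp [mem_prefixSet]

lemma prefixSet_levelSet {x : Fin n → ℝ} (σ : Equiv.Perm (Fin n))
    (hanti : ∀ p q : Fin n, p ≤ q → x (σ q) ≤ x (σ p)) (θ : ℝ) :
    prefixSet σ (Finset.univ.filter fun j => θ < x j).card
      = Finset.univ.filter fun j => θ < x j := by
  set L := Finset.univ.filter fun j => θ < x j with hL
  set s := L.card with hs
  have hsn : s ≤ n := by
    have := Finset.card_le_univ L
    simpa using this
  set P := Finset.univ.filter (fun p : Fin n => θ < x (σ p)) with hP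
  have hPL : P = L.image σ.symm := by
    ext p
    simp only [hP, hL, Finset.mem_filter, Finset.mem_univ, true_and, Finset.mem_image]
    constructor
    · intro h; exact ⟨σ p, h, by simp⟩
    · rintro ⟨a, ha, rfl⟩; simpa using ha
  have hPcard : P.card = s := by
    rw [hPL, Finset.card_image_of_injective _ σ.symm.injective]
  have hPQ : P ⊆ Finset.univ.filter (fun p : Fin n => (p : ℕ) < s) := by
    intro p hp
    simp only [hP, Finset.mem_filter, Finset.mem_univ, true_and] at hp
    simp only [Finset.mem_filter, Finset.mem_univ, true_and]
    have hsub : Finset.univ.filter (fun q : Fin n => (q : ℕ) < (p : ℕ) + 1) ⊆ P := by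
      intro q hq
      simp only [Finset.mem_filter, Finset.mem_univ, true_and] at hq
      simp only [hP, Finset.mem_filter, Finset.mem_univ, true_and]
      have hqp : q ≤ p := by
        rw [Fin.le_def]; omega
      exact lt_of_lt_of_le hp (hanti q p hqp)
    have hcard := Finset.card_le_card hsub
    rw [card_filter_lt (by omega : (p : ℕ) + 1 ≤ n), hPcard] at hcard
    omega
  have hQcard : (Finset.univ.filter (fun p : Fin n => (p : ℕ) < s)).card = s :=
    card_filter_lt hsn
  have hPQeq : P = Finset.univ.filter (fun p : Fin n => (p : ℕ) < s) :=
    Finset.eq_of_subset_of_card_le hPQ (by rw [hQcard, hPcard])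
  show (Finset.univ.filter (fun j : Fin n => (j : ℕ) < s)).image σ = L
  rw [← hPQeq, hPL, Finset.image_image]
  have : (σ : Fin n → Fin n) ∘ σ.symm = id := by funext a; simp
  rw [this, Finset.image_id]

end LovaszAux
namespace LovaszAux

lemma sum_Ico_telescope (F : ℕ → ℝ) {a b : ℕ} (h : a ≤ b) :
    ∑ k ∈ Finset.Ico a b, (F (k + 1) - F k) = F b - F a := by
  rw [Finset.sum_Ico_eq_sub _ h, Finset.sum_range_sub, Finset.sum_range_sub]
  ring

lemma eval_twoLevel {n : ℕ} (f : Finset (Fin n) → ℝ) (h0 : f ∅ = 0)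
    {S T : Finset (Fin n)} (hST : Disjoint S T) {c d : ℝ} (hd : 0 < d) (hdc : d < c)
    (x : Fin n → ℝ) (hx : ∀ j, x j = if j ∈ S then c else if j ∈ T then d else 0) :
    lovasz f x = (c - d) * f S + d * f (S ∪ T) := by
  classical
  set σ := Tuple.sort (fun i => -x i) with hσ
  have hanti : ∀ p q : Fin n, p ≤ q → x (σ q) ≤ x (σ p) := by
    intro p q hpq
    have := Tuple.monotone_sort (fun i => -x i) hpq
    simpa using this
  set s := S.card with hscard
  set t := T.card with htcard
  have hcardST : (S ∪ T).card = s + t := Finset.card_union_of_disjoint hST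
  have hstn : s + t ≤ n := by
    have := Finset.card_le_univ (S ∪ T)
    rw [hcardST] at this
    simpa using this
  have hfd : (Finset.univ.filter fun j => d < x j) = S := by
    ext j
    simp only [Finset.mem_filter, Finset.mem_univ, true_and, hx j]
    by_cases h1 : j ∈ S
    · simp [h1, hdc]
    · by_cases h2 : j ∈ T <;> simp [h1, h2, hd, le_of_lt hd]
  have hf0 : (Finset.univ.filter fun j => (0:ℝ) < x j) = S ∪ T := by
    ext j
    simp only [Finset.mem_filter, Finset.mem_univ, true_and, hx j, Finset.mem_union]
    by_cases h1 : j ∈ S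
    · simp [h1, lt_trans hd hdc]
    · by_cases h2 : j ∈ T <;> simp [h1, h2, hd]
  have h1 : prefixSet σ s = S := by
    have := prefixSet_levelSet σ hanti d
    rwa [hfd] at this
  have h2 : prefixSet σ (s + t) = S ∪ T := by
    have := prefixSet_levelSet σ hanti 0
    rwa [hf0, hcardST] at this
  have hval : ∀ i : Fin n,
      x (σ i) = if (i : ℕ) < s then c else if (i : ℕ) < s + t then d else 0 := by
    intro i
    by_cases h1i : (i : ℕ) < s
    · have : σ i ∈ S := by
        rw [← h1, mem_prefixSet]; simpa using h1i
      simp [hx, this, h1i]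
    · by_cases h2i : (i : ℕ) < s + t
      · have hmem : σ i ∈ S ∪ T := by
          rw [← h2, mem_prefixSet]; simpa using h2i
        have hnotS : σ i ∉ S := by
          rw [← h1, mem_prefixSet]; simpa using h1i
        have hT : σ i ∈ T := by
          rcases Finset.mem_union.mp hmem with h | h
          · exact absurd h hnotS
          · exact h
        simp [hx, hnotS, hT, h1i, h2i]
      · have hnot : σ i ∉ S ∪ T := by
          rw [← h2, mem_prefixSet]; simpa using h2i
        rw [Finset.mem_union] at hnot
        push_neg at hnot
        simp [hx, hnot.1, hnot.2, h1i, h2i]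
  have hlov : lovasz f x = lovaszSum f x σ := rfl
  rw [hlov, lovaszSum]
  have hcongr : ∀ i : Fin n,
      x (σ i) * (f (prefixSet σ ((i:ℕ) + 1)) - f (prefixSet σ (i:ℕ)))
        = (if (i:ℕ) < s then c else if (i:ℕ) < s + t then d else 0)
            * (f (prefixSet σ ((i:ℕ) + 1)) - f (prefixSet σ (i:ℕ))) := by
    intro i; rw [hval i]
  rw [Finset.sum_congr rfl (fun i _ => hcongr i)]
  rw [Fin.sum_univ_eq_sum_range (fun k : ℕ =>
      (if k < s then c else if k < s + t then d else 0)
        * (f (prefixSet σ (k + 1)) - f (prefixSet σ k)))]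
  rw [Finset.range_eq_Ico,
    ← Finset.sum_Ico_consecutive _ (Nat.zero_le (s+t)) hstn,
    ← Finset.sum_Ico_consecutive _ (Nat.zero_le s) (Nat.le_add_right s t)]
  have hA : ∑ k ∈ Finset.Ico 0 s,
      (if k < s then c else if k < s + t then d else 0)
        * (f (prefixSet σ (k + 1)) - f (prefixSet σ k))
      = c * (f (prefixSet σ s) - f (prefixSet σ 0)) := by
    rw [← sum_Ico_telescope (fun k => f (prefixSet σ k)) (Nat.zero_le s), Finset.mul_sum]
    apply Finset.sum_congr rfl
    intro k hk
    rw [Finset.mem_Ico] at hk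
    simp [hk.2]
  have hB : ∑ k ∈ Finset.Ico s (s + t),
      (if k < s then c else if k < s + t then d else 0)
        * (f (prefixSet σ (k + 1)) - f (prefixSet σ k))
      = d * (f (prefixSet σ (s + t)) - f (prefixSet σ s)) := by
    rw [← sum_Ico_telescope (fun k => f (prefixSet σ k)) (Nat.le_add_right s t), Finset.mul_sum]
    apply Finset.sum_congr rfl
    intro k hk
    rw [Finset.mem_Ico] at hk
    have : ¬ k < s := by omega
    simp [this, hk.2]
  have hC : ∑ k ∈ Finset.Ico (s + t) n,
      (if k < s then c else if k < s + t then d else 0)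
        * (f (prefixSet σ (k + 1)) - f (prefixSet σ k)) = 0 := by
    apply Finset.sum_eq_zero
    intro k hk
    rw [Finset.mem_Ico] at hk
    have h1 : ¬ k < s := by omega
    have h2 : ¬ k < s + t := by omega
    simp [h1, h2]
  rw [hA, hB, hC, h1, h2, prefixSet_zero, h0]
  ring

end LovaszAux
namespace LovaszAux

variable {n : ℕ}

/-- Swapping two adjacent positions only changes the prefix set at the boundary. -/
lemma prefixSet_mul_swap (τ : Equiv.Perm (Fin n)) {p : ℕ} (hp : p + 1 < n) {k : ℕ}
    (hk : k ≠ p + 1) :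
    prefixSet (τ * Equiv.swap (⟨p, Nat.lt_of_succ_lt hp⟩ : Fin n) ⟨p + 1, hp⟩) k
      = prefixSet τ k := by
  set i : Fin n := ⟨p, Nat.lt_of_succ_lt hp⟩
  set i' : Fin n := ⟨p + 1, hp⟩
  ext j
  rw [mem_prefixSet, mem_prefixSet]
  have hsymm : (τ * Equiv.swap i i').symm j = Equiv.swap i i' (τ.symm j) := by
    simp [Equiv.Perm.mul_def, Equiv.symm_trans_apply, Equiv.swap_inv]
  rw [hsymm]
  rcases eq_or_ne (τ.symm j) i with h | h
  · rw [h, Equiv.swap_apply_left]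
    show (p + 1 < k) ↔ ((i : ℕ) < k)
    show (p + 1 < k) ↔ (p < k)
    omega
  · rcases eq_or_ne (τ.symm j) i' with h' | h'
    · rw [h', Equiv.swap_apply_right]
      show ((i : ℕ) < k) ↔ (p + 1 < k)
      show (p < k) ↔ (p + 1 < k)
      omega
    · rw [Equiv.swap_apply_of_ne_of_ne h h']

/-- The exchange step: swapping adjacent, wrongly-ordered elements does not
decrease the Lovász sum, for submodular `f`. -/
lemma lovaszSum_le_swap {f : Finset (Fin n) → ℝ} (hsub : Submodular f) (x : Fin n → ℝ)
    (τ : Equiv.Perm (Fin n)) {p : ℕ} (hp : p + 1 < n)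
    (hx : x (τ ⟨p, Nat.lt_of_succ_lt hp⟩) ≤ x (τ ⟨p + 1, hp⟩)) :
    lovaszSum f x τ ≤
      lovaszSum f x (τ * Equiv.swap (⟨p, Nat.lt_of_succ_lt hp⟩ : Fin n) ⟨p + 1, hp⟩) := by
  classical
  set i : Fin n := ⟨p, Nat.lt_of_succ_lt hp⟩ with hi
  set i' : Fin n := ⟨p + 1, hp⟩ with hi'
  set τ' := τ * Equiv.swap i i' with hτ'
  set a := τ i with ha
  set b := τ i' with hb
  have hii' : i ≠ i' := by simp [hi, hi', Fin.ext_iff]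
  have hab : a ≠ b := fun h => hii' (τ.injective h)
  have hτ'i : τ' i = b := by simp [hτ', Equiv.Perm.mul_apply, hb]
  have hτ'i' : τ' i' = a := by simp [hτ', Equiv.Perm.mul_apply, ha]
  have hτ'other : ∀ q : Fin n, q ≠ i → q ≠ i' → τ' q = τ q := by
    intro q h1 h2
    simp [hτ', Equiv.Perm.mul_apply, Equiv.swap_apply_of_ne_of_ne h1 h2]
  set S := prefixSet τ p with hS
  have hSτ' : prefixSet τ' p = S := prefixSet_mul_swap τ hp (by omega)
  have hS1 : prefixSet τ (p + 1) = insert a S := by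
    rw [prefixSet_succ τ (Nat.lt_of_succ_lt hp)]
  have hS2 : prefixSet τ (p + 2) = insert b (insert a S) := by
    rw [prefixSet_succ τ hp, hS1]
  have hS1' : prefixSet τ' (p + 1) = insert b S := by
    rw [prefixSet_succ τ' (Nat.lt_of_succ_lt hp), hSτ', ← hi, hτ'i]
  have hS2' : prefixSet τ' (p + 2) = insert a (insert b S) := by
    rw [prefixSet_succ τ' hp, hS1', ← hi', hτ'i']
  have haS : a ∉ S := by
    rw [hS, ha]
    exact not_mem_prefixSet_self τ i
  have hbS : b ∉ S := by
    rw [hS, hb]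
    intro hmem
    rw [mem_prefixSet] at hmem
    simp [hi'] at hmem
  have hbaS : b ∉ insert a S := by simp [Finset.mem_insert, Ne.symm hab, hbS]
  have habS : a ∉ insert b S := by simp [Finset.mem_insert, hab, haS]
  -- submodularity instance
  have hkey : f (insert a (insert b S)) - f (insert b S) ≤ f (insert a S) - f S :=
    hsub S (insert b S) (Finset.subset_insert _ _) a habS
  -- sum difference supported on {i, i'}
  have hdiff : lovaszSum f x τ' - lovaszSum f x τ =
      (x b * (f (insert b S) - f S) + x a * (f (insert a (insert b S)) - f (insert b S)))
      - (x a * (f (insert a S) - f S) + x b * (f (insert b (insert a S)) - f (insert a S))) := by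
    rw [lovaszSum, lovaszSum, ← Finset.sum_sub_distrib]
    have hzero : ∀ q ∈ (Finset.univ : Finset (Fin n)), q ≠ i ∧ q ≠ i' →
        x (τ' q) * (f (prefixSet τ' ((q:ℕ) + 1)) - f (prefixSet τ' (q:ℕ)))
          - x (τ q) * (f (prefixSet τ ((q:ℕ) + 1)) - f (prefixSet τ (q:ℕ))) = 0 := by
      intro q hq hqne
      have h1 : τ' q = τ q := hτ'other q hqne.1 hqne.2
      have h2 : prefixSet τ' ((q : ℕ) + 1) = prefixSet τ ((q : ℕ) + 1) := by
        apply prefixSet_mul_swap τ hp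
        intro hc
        apply hqne.1
        apply Fin.ext
        show (q : ℕ) = p
        omega
      have h3 : prefixSet τ' (q : ℕ) = prefixSet τ (q : ℕ) := by
        apply prefixSet_mul_swap τ hp
        intro hc
        apply hqne.2
        apply Fin.ext
        show (q : ℕ) = p + 1
        omega
      rw [h1, h2, h3]
      ring
    rw [Finset.sum_eq_add_of_mem i i' (Finset.mem_univ _) (Finset.mem_univ _) hii' hzero]
    have e1 : ((i : ℕ) + 1) = p + 1 := rfl
    have e2 : ((i' : ℕ) + 1) = p + 2 := rfl
    have e3 : ((i : ℕ)) = p := rfl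
    have e4 : ((i' : ℕ)) = p + 1 := rfl
    rw [e1, e2, e3, e4, hτ'i, hτ'i', hS1, hS2, hS1', hS2', hSτ']
    ring
  have hcomm : insert b (insert a S) = insert a (insert b S) := Finset.insert_comm b a S
  rw [hcomm] at hdiff
  have hprod : 0 ≤ (x b - x a) * ((f (insert a S) - f S) - (f (insert a (insert b S)) - f (insert b S))) :=
    mul_nonneg (sub_nonneg.mpr hx) (sub_nonneg.mpr hkey)
  nlinarith [hdiff, hprod]

end LovaszAux
namespace LovaszAux

variable {n : ℕ}

/-- The number of inversions of a permutation. -/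
def invCount (π : Equiv.Perm (Fin n)) : ℕ :=
  ((Finset.univ ×ˢ Finset.univ).filter
    fun pq : Fin n × Fin n => pq.1 < pq.2 ∧ π pq.2 < π pq.1).card

lemma invCount_one : invCount (1 : Equiv.Perm (Fin n)) = 0 := by
  rw [invCount, Finset.card_eq_zero, Finset.filter_eq_empty_iff]
  rintro pq -
  rintro ⟨h1, h2⟩
  exact absurd h1 (asymm h2)

lemma eq_one_of_strictMono (π : Equiv.Perm (Fin n)) (h : StrictMono (π : Fin n → Fin n)) :
    π = 1 := by
  have hid : StrictMono (id : Fin n → Fin n) := strictMono_id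
  have hrange : Set.range (π : Fin n → Fin n) = Set.range (id : Fin n → Fin n) := by
    rw [Set.range_id, Set.range_eq_univ.mpr π.surjective]
  have := (StrictMono.range_inj h hid).mp hrange
  exact Equiv.ext fun q => congrFun this q

lemma invCount_eq_zero (π : Equiv.Perm (Fin n)) (h : invCount π = 0) : π = 1 := by
  rw [invCount, Finset.card_eq_zero] at h
  apply eq_one_of_strictMono
  intro p q hpq
  rcases lt_trichotomy (π p) (π q) with h' | h' | h'
  · exact h'
  · exact absurd (π.injective h') (ne_of_lt hpq)
  · exfalso
    have : (p, q) ∈ (Finset.univ ×ˢ Finset.univ).filter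
        (fun pq : Fin n × Fin n => pq.1 < pq.2 ∧ π pq.2 < π pq.1) := by
      simp [hpq, h']
    rw [h] at this
    exact absurd this (Finset.notMem_empty _)

lemma exists_descent (π : Equiv.Perm (Fin n)) (h : π ≠ 1) :
    ∃ (p : ℕ) (hp : p + 1 < n), π ⟨p + 1, hp⟩ < π ⟨p, Nat.lt_of_succ_lt hp⟩ := by
  by_contra hd
  push_neg at hd
  apply h
  apply eq_one_of_strictMono
  match n, π, hd with
  | 0, π, hd => intro p; exact absurd p.2 (by omega)
  | (m+1), π, hd =>
    rw [Fin.strictMono_iff_lt_succ]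
    intro q
    have h1 : (q : ℕ) + 1 < m + 1 := by omega
    have := hd (q : ℕ) h1
    have hne : π (⟨(q:ℕ), Nat.lt_of_succ_lt h1⟩ : Fin (m+1)) ≠ π ⟨(q:ℕ)+1, h1⟩ := by
      intro hc
      have h2 : (q : ℕ) = (q : ℕ) + 1 := congrArg Fin.val (π.injective hc)
      omega
    have hcast : (q.castSucc : Fin (m+1)) = ⟨(q:ℕ), Nat.lt_of_succ_lt h1⟩ := rfl
    have hsucc : (q.succ : Fin (m+1)) = ⟨(q:ℕ)+1, h1⟩ := rfl
    rw [hcast, hsucc]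
    exact lt_of_le_of_ne this hne

lemma swap_adj_lt {p : ℕ} (hp : p + 1 < n) {a b : Fin n} (hab : a < b)
    (hne : ¬(a = (⟨p, Nat.lt_of_succ_lt hp⟩ : Fin n) ∧ b = ⟨p + 1, hp⟩)) :
    Equiv.swap (⟨p, Nat.lt_of_succ_lt hp⟩ : Fin n) ⟨p + 1, hp⟩ a
      < Equiv.swap (⟨p, Nat.lt_of_succ_lt hp⟩ : Fin n) ⟨p + 1, hp⟩ b := by
  have hval : ∀ z : Fin n,
      ((Equiv.swap (⟨p, Nat.lt_of_succ_lt hp⟩ : Fin n) ⟨p + 1, hp⟩ z : Fin n) : ℕ)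
        = if (z : ℕ) = p then p + 1 else if (z : ℕ) = p + 1 then p else (z : ℕ) := by
    intro z
    rw [Equiv.swap_apply_def]
    by_cases h1 : z = (⟨p, Nat.lt_of_succ_lt hp⟩ : Fin n)
    · rw [if_pos h1]
      have hzp : (z : ℕ) = p := by rw [h1]
      simp [hzp]
    · rw [if_neg h1]
      have hz1 : (z : ℕ) ≠ p := fun hc => h1 (Fin.ext hc)
      by_cases h2 : z = (⟨p + 1, hp⟩ : Fin n)
      · rw [if_pos h2]
        have hzp : (z : ℕ) = p + 1 := by rw [h2]
        simp [hz1, hzp]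
      · rw [if_neg h2]
        have hz2 : (z : ℕ) ≠ p + 1 := fun hc => h2 (Fin.ext hc)
        simp [hz1, hz2]
  rw [Fin.lt_def, hval, hval]
  have hne' : ¬((a : ℕ) = p ∧ (b : ℕ) = p + 1) := by
    rintro ⟨h1, h2⟩
    exact hne ⟨Fin.ext h1, Fin.ext h2⟩
  have hab' : (a : ℕ) < (b : ℕ) := hab
  have hbn : (b : ℕ) < n := b.2
  split_ifs <;> omega

lemma invCount_swap_lt (π : Equiv.Perm (Fin n)) {p : ℕ} (hp : p + 1 < n)
    (hdesc : π ⟨p + 1, hp⟩ < π ⟨p, Nat.lt_of_succ_lt hp⟩) :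
    invCount (π * Equiv.swap (⟨p, Nat.lt_of_succ_lt hp⟩ : Fin n) ⟨p + 1, hp⟩) < invCount π := by
  classical
  set i : Fin n := ⟨p, Nat.lt_of_succ_lt hp⟩ with hi
  set i' : Fin n := ⟨p + 1, hp⟩ with hi'
  set s := Equiv.swap i i' with hs
  set P := (Finset.univ ×ˢ Finset.univ).filter
    (fun pq : Fin n × Fin n => pq.1 < pq.2 ∧ π pq.2 < π pq.1) with hP
  set P' := (Finset.univ ×ˢ Finset.univ).filter
    (fun pq : Fin n × Fin n => pq.1 < pq.2 ∧ (π * s) pq.2 < (π * s) pq.1) with hP'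
  have hii' : i < i' := by simp [hi, hi', Fin.lt_def]
  have hmemP : (i, i') ∈ P := by simp [hP, hii', hdesc]
  have hcard : P'.card ≤ (P.erase (i, i')).card := by
    apply Finset.card_le_card_of_injOn (fun pq => (s pq.1, s pq.2))
    · intro pq hpq
      simp only [hP', Finset.mem_coe, Finset.mem_filter, Finset.mem_product, Finset.mem_univ, true_and] at hpq
      obtain ⟨h1, h2⟩ := hpq
      have hpqne : ¬(pq.1 = i ∧ pq.2 = i') := by
        rintro ⟨e1, e2⟩
        rw [e1, e2] at h2
        simp only [Equiv.Perm.mul_apply, hs] at h2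
        rw [Equiv.swap_apply_left, Equiv.swap_apply_right] at h2
        exact absurd hdesc (asymm h2)
      have hlt : s pq.1 < s pq.2 := swap_adj_lt hp h1 hpqne
      rw [Finset.mem_coe, Finset.mem_erase]
      constructor
      · intro hc
        have e1 : s pq.1 = i := congrArg Prod.fst hc
        have e2 : s pq.2 = i' := congrArg Prod.snd hc
        have : pq.1 = s i := by rw [← e1]; simp [hs]
        have h2' : pq.2 = s i' := by rw [← e2]; simp [hs]
        rw [Equiv.swap_apply_left] at this
        rw [Equiv.swap_apply_right] at h2'
        rw [this, h2'] at h1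
        exact absurd hii' (asymm h1)
      · simp only [hP, Finset.mem_filter, Finset.mem_product, Finset.mem_univ, true_and]
        refine ⟨hlt, ?_⟩
        simpa [Equiv.Perm.mul_apply] using h2
    · intro u hu v hv huv
      have h1 : s u.1 = s v.1 := congrArg Prod.fst huv
      have h2 : s u.2 = s v.2 := congrArg Prod.snd huv
      exact Prod.ext (s.injective h1) (s.injective h2)
  have hlt : (P.erase (i, i')).card < P.card := Finset.card_erase_lt_of_mem hmemP
  calc invCount (π * s) = P'.card := rfl
    _ ≤ (P.erase (i, i')).card := hcard
    _ < P.card := hlt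

/-- Greedy lemma: among all permutations, a decreasing sort maximizes the Lovász sum. -/
lemma lovaszSum_le_lovasz {f : Finset (Fin n) → ℝ} (hsub : Submodular f) (x : Fin n → ℝ)
    (τ : Equiv.Perm (Fin n)) : lovaszSum f x τ ≤ lovasz f x := by
  classical
  set σ := Tuple.sort (fun i => -x i) with hσ
  have hanti : ∀ p q : Fin n, p ≤ q → x (σ q) ≤ x (σ p) := by
    intro p q hpq
    have := Tuple.monotone_sort (fun i => -x i) hpq
    simpa using this
  show lovaszSum f x τ ≤ lovaszSum f x σ
  have key : ∀ N : ℕ, ∀ τ : Equiv.Perm (Fin n), invCount (σ⁻¹ * τ) ≤ N →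
      lovaszSum f x τ ≤ lovaszSum f x σ := by
    intro N
    induction N with
    | zero =>
      intro τ hτ
      have : σ⁻¹ * τ = 1 := invCount_eq_zero _ (Nat.le_zero.mp hτ)
      have : τ = σ := by
        have := congrArg (fun ρ => σ * ρ) this
        simpa [mul_assoc] using this
      rw [this]
    | succ N ih =>
      intro τ hτ
      by_cases hz : invCount (σ⁻¹ * τ) = 0
      · have : σ⁻¹ * τ = 1 := invCount_eq_zero _ hz
        have : τ = σ := by
          have := congrArg (fun ρ => σ * ρ) this
          simpa [mul_assoc] using this
        rw [this]
      · have hne : σ⁻¹ * τ ≠ 1 := by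
          intro hc
          rw [hc] at hz
          exact hz invCount_one
        obtain ⟨p, hp, hdesc⟩ := exists_descent _ hne
        have hxle : x (τ ⟨p, Nat.lt_of_succ_lt hp⟩) ≤ x (τ ⟨p + 1, hp⟩) := by
          have h1 : τ ⟨p, Nat.lt_of_succ_lt hp⟩
              = σ ((σ⁻¹ * τ) ⟨p, Nat.lt_of_succ_lt hp⟩) := by
            simp [Equiv.Perm.mul_apply]
          have h2 : τ ⟨p + 1, hp⟩ = σ ((σ⁻¹ * τ) ⟨p + 1, hp⟩) := by
            simp [Equiv.Perm.mul_apply]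
          rw [h1, h2]
          exact hanti _ _ (le_of_lt hdesc)
        have hstep := lovaszSum_le_swap hsub x τ hp hxle
        have hmeas : invCount (σ⁻¹ * (τ * Equiv.swap (⟨p, Nat.lt_of_succ_lt hp⟩ : Fin n)
            ⟨p + 1, hp⟩)) < invCount (σ⁻¹ * τ) := by
          have := invCount_swap_lt (σ⁻¹ * τ) hp hdesc
          simpa [mul_assoc] using this
        exact le_trans hstep (ih _ (by omega))
  exact key (invCount (σ⁻¹ * τ)) τ le_rfl

end LovaszAux
namespace LovaszAux

variable {n : ℕ}

lemma lovaszSum_linear (f : Finset (Fin n) → ℝ) (x y : Fin n → ℝ) (a b : ℝ)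
    (σ : Equiv.Perm (Fin n)) :
    lovaszSum f (a • x + b • y) σ = a * lovaszSum f x σ + b * lovaszSum f y σ := by
  simp only [lovaszSum, Finset.mul_sum, ← Finset.sum_add_distrib]
  apply Finset.sum_congr rfl
  intro i _
  simp only [Pi.add_apply, Pi.smul_apply, smul_eq_mul]
  ring

end LovaszAux

/-- A set function with `f(∅) = 0` is submodular iff its Lovász extension is convex
on `[0,1]^n`. -/
theorem submodular_iff_lovasz_convexOn {n : ℕ} (f : Finset (Fin n) → ℝ) (h0 : f ∅ = 0) :
    Submodular f ↔ ConvexOn ℝ (Set.Icc (0 : Fin n → ℝ) 1) (lovasz f) := by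
  classical
  constructor
  · -- submodular → convex
    intro hsub
    refine ⟨convex_Icc _ _, ?_⟩
    intro x hx y hy a b ha hb hab
    set σz := Tuple.sort (fun i => -(a • x + b • y) i) with hσz
    have h1 : lovasz f (a • x + b • y) = lovaszSum f (a • x + b • y) σz := rfl
    rw [h1, LovaszAux.lovaszSum_linear f x y a b σz]
    have h2 : lovaszSum f x σz ≤ lovasz f x := LovaszAux.lovaszSum_le_lovasz hsub x σz
    have h3 : lovaszSum f y σz ≤ lovasz f y := LovaszAux.lovaszSum_le_lovasz hsub y σz
    have := add_le_add (mul_le_mul_of_nonneg_left h2 ha) (mul_le_mul_of_nonneg_left h3 hb)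
    simpa [smul_eq_mul] using this
  · -- convex → submodular
    intro hconv A B hAB i hiB
    set u : Fin n → ℝ := fun j => if j ∈ insert i A then 1 else 0 with hu
    set v : Fin n → ℝ := fun j => if j ∈ B then 1 else 0 with hv
    have hiA : i ∉ A := fun h => hiB (hAB h)
    have humem : u ∈ Set.Icc (0 : Fin n → ℝ) 1 := by
      constructor <;> intro j <;> simp only [hu, Pi.zero_apply, Pi.one_apply] <;>
        split_ifs <;> norm_num
    have hvmem : v ∈ Set.Icc (0 : Fin n → ℝ) 1 := by
      constructor <;> intro j <;> simp only [hv, Pi.zero_apply, Pi.one_apply] <;>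
        split_ifs <;> norm_num
    -- evaluate lovasz at u
    have hevalu : lovasz f u = f (insert i A) := by
      have := LovaszAux.eval_twoLevel f h0 (Finset.disjoint_empty_right (insert i A))
        (by norm_num : (0:ℝ) < 1/2) (by norm_num : (1:ℝ)/2 < 1) u ?_
      · rw [this, Finset.union_empty]; ring
      · intro j
        show (if j ∈ insert i A then (1:ℝ) else 0)
          = if j ∈ insert i A then 1 else if j ∈ (∅ : Finset (Fin n)) then 1/2 else 0
        by_cases h : j ∈ insert i A
        · rw [if_pos h, if_pos h]
        · rw [if_neg h, if_neg h]
          simp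
    have hevalv : lovasz f v = f B := by
      have := LovaszAux.eval_twoLevel f h0 (Finset.disjoint_empty_right B)
        (by norm_num : (0:ℝ) < 1/2) (by norm_num : (1:ℝ)/2 < 1) v ?_
      · rw [this, Finset.union_empty]; ring
      · intro j
        show (if j ∈ B then (1:ℝ) else 0)
          = if j ∈ B then 1 else if j ∈ (∅ : Finset (Fin n)) then 1/2 else 0
        by_cases h : j ∈ B
        · rw [if_pos h, if_pos h]
        · rw [if_neg h, if_neg h]
          simp
    -- the midpoint
    set T : Finset (Fin n) := insert i (B \ A) with hT
    have hdisjAT : Disjoint A T := by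
      rw [hT, Finset.disjoint_insert_right]
      exact ⟨hiA, Finset.disjoint_sdiff⟩
    have hAT : A ∪ T = insert i B := by
      rw [hT]
      ext j
      simp only [Finset.mem_union, Finset.mem_insert, Finset.mem_sdiff]
      constructor
      · rintro (h | h | ⟨h, _⟩)
        · exact Or.inr (hAB h)
        · exact Or.inl h
        · exact Or.inr h
      · rintro (h | h)
        · exact Or.inr (Or.inl h)
        · by_cases hA : j ∈ A
          · exact Or.inl hA
          · exact Or.inr (Or.inr ⟨h, hA⟩)
    have hevalm : lovasz f ((1/2 : ℝ) • u + (1/2 : ℝ) • v)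
        = (1/2) * f A + (1/2) * f (insert i B) := by
      have := LovaszAux.eval_twoLevel f h0 hdisjAT
        (by norm_num : (0:ℝ) < 1/2) (by norm_num : (1:ℝ)/2 < 1)
        ((1/2 : ℝ) • u + (1/2 : ℝ) • v) ?_
      · rw [this, hAT]; ring
      · intro j
        simp only [Pi.add_apply, Pi.smul_apply, smul_eq_mul, hu, hv, hT]
        by_cases hA : j ∈ A
        · have h1 : j ∈ insert i A := Finset.mem_insert_of_mem hA
          have h2 : j ∈ B := hAB hA
          simp [h1, h2, hA] <;> norm_num
        · by_cases hji : j = i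
          · subst hji
            have h1 : j ∈ insert j A := Finset.mem_insert_self j A
            simp [h1, hiB, hA] <;> norm_num
          · have h1 : j ∉ insert i A := by simp [hji, hA]
            by_cases hB : j ∈ B
            · simp [h1, hB, hA, hji] <;> norm_num
            · simp [h1, hB, hA, hji] <;> norm_num
    have hkey := hconv.2 humem hvmem (by norm_num : (0:ℝ) ≤ 1/2) (by norm_num : (0:ℝ) ≤ 1/2)
      (by norm_num : (1/2 : ℝ) + 1/2 = 1)
    rw [hevalm] at hkey
    rw [hevalu, hevalv] at hkey
    simp only [smul_eq_mul] at hkey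
    linarith
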